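/- Let F be a free group of finite rank k ≥ 2 with word length, and let P be the set of all nontrivial elements of F that are proper powers (w = u^n for some n ≥ 2). Then the number of elements of P of length exactly n, divided by the total number 2k(2k−1)^{n−1} of elements of length n, tends to 0 exponentially fast as n → ∞. -/

import Mathlib

open List FreeGroup Filter

namespace PPNeg

variable {α : Type*} [DecidableEq α]

/-- the non-cancellation relation on letters -/
abbrev R' (a b : α × Bool) : Prop := ¬(a.1 = b.1 ∧ a.2 = !b.2)

/-- a word is reduced iff no adjacent cancelling pair -/
abbrev Red' (L : List (α × Bool)) : Prop := List.Chain' R' L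

lemma reduce_eq_self {L : List (α × Bool)} (h : Red' L) : FreeGroup.reduce L = L := by
  induction L with
  | nil => rfl
  | cons a L ih =>
    have hL : Red' L := List.IsChain.tail h
    rw [FreeGroup.reduce.cons, ih hL]
    cases L with
    | nil => rfl
    | cons b M =>
      have hab : R' a b := (List.isChain_cons_cons.1 h).1
      simp only []
      rw [if_neg hab]

lemma red'_of_reduce {L : List (α × Bool)} (h : FreeGroup.reduce L = L) : Red' L := by
  induction L with
  | nil => exact List.isChain_nil
  | cons a L ih =>
    rw [FreeGroup.reduce.cons] at h
    rcases hL : FreeGroup.reduce L with _ | ⟨b, M⟩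
    · rw [hL] at h
      simp only [] at h
      have : [] = L := by injection h
      subst this
      exact List.isChain_singleton a
    · rw [hL] at h
      simp only [] at h
      by_cases hc : a.1 = b.1 ∧ a.2 = !b.2
      · rw [if_pos hc] at h
        exfalso
        have h1 : (FreeGroup.reduce L).length ≤ L.length :=
          (FreeGroup.reduce.red (L := L)).length_le
        have h2 := congrArg List.length h
        rw [hL] at h1
        simp at h1 h2
        omega
      · rw [if_neg hc] at h
        have hLeq : L = b :: M := by
          injection h with h1 h2
          exact h2.symm
        subst hLeq
        have hred : FreeGroup.reduce (b :: M) = b :: M := hL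
        exact List.isChain_cons_cons.2 ⟨hc, ih hred⟩

lemma red'_toWord (x : FreeGroup α) : Red' x.toWord :=
  red'_of_reduce (FreeGroup.reduce_toWord x)

lemma toWord_mk_eq {L : List (α × Bool)} (h : Red' L) : (FreeGroup.mk L).toWord = L := by
  rw [FreeGroup.toWord_mk, reduce_eq_self h]

lemma invRev_cons (a : α × Bool) (L : List (α × Bool)) :
    invRev (a :: L) = invRev L ++ [(a.1, !a.2)] := by
  simp [invRev]

/-- cyclic decomposition of a reduced word -/
lemma cyclic_decomp : ∀ (N : ℕ) (L : List (α × Bool)), L.length ≤ N → Red' L → L ≠ [] →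
    ∃ V C : List (α × Bool), C ≠ [] ∧ L = V ++ C ++ invRev V ∧
      (∀ a ∈ C.getLast?, ∀ b ∈ C.head?, R' a b) := by
  intro N
  induction N with
  | zero => intro L hN _ hne; simp at hN; exact absurd hN hne
  | succ N ih =>
    intro L hN hred hne
    cases L with
    | nil => exact absurd rfl hne
    | cons a T =>
      rcases T.eq_nil_or_concat with rfl | ⟨M, z, hT⟩
      · refine ⟨[], [a], by simp, by simp, ?_⟩
        intro x hx y hy
        simp at hx hy
        subst hx; subst hy
        intro ⟨_, h2⟩
        simp at h2
      · rw [List.concat_eq_append] at hT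
        subst hT
        by_cases hc : z.1 = a.1 ∧ z.2 = !a.2
        · -- peel off the cancelling ends
          have hM : M ≠ [] := by
            rintro rfl
            rw [List.nil_append] at hred
            exact (List.isChain_pair.1 hred) ⟨hc.1.symm, by simp [hc.2]⟩
          have hMred : Red' M := by
            have : M <:+: a :: (M ++ [z]) := ⟨[a], [z], by simp⟩
            exact List.IsChain.infix hred this
          have hMlen : M.length ≤ N := by
            have := hN
            simp at this
            omega
          obtain ⟨V', C', hC', hdec, hj⟩ := ih M hMlen hMred hM
          refine ⟨a :: V', C', hC', ?_, hj⟩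
          have hz : z = (a.1, !a.2) := by
            rcases z with ⟨z1, z2⟩
            simp at hc
            simp [hc.1, hc.2]
          rw [invRev_cons, hz]
          rw [hdec]
          simp [List.append_assoc]
        · refine ⟨[], a :: (M ++ [z]), by simp, by simp, ?_⟩
          intro x hx y hy
          have : (a :: (M ++ [z])).getLast? = some z := by
            rw [show a :: (M ++ [z]) = (a :: M) ++ [z] from by simp, List.getLast?_concat]
          rw [this] at hx
          have hx' : z = x := by simpa using hx
          have hy' : a = y := by simpa using hy
          subst hx'; subst hy'
          exact hc

lemma chain'_replicate_of_rel {β : Type*} {r : β → β → Prop} {b : β} (h : r b b) (n : ℕ) :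
    List.Chain' r (List.replicate n b) := by
  show List.IsChain _ _
  rw [List.isChain_iff_getElem]
  intro i hi
  simpa using h

lemma flatten_replicate_succ {C : List (α × Bool)} {m : ℕ} :
    (List.replicate (m + 1) C).flatten = C ++ (List.replicate m C).flatten := by
  rw [List.replicate_succ, List.flatten_cons]

lemma flatten_replicate_succ' {C : List (α × Bool)} {m : ℕ} :
    (List.replicate (m + 1) C).flatten = (List.replicate m C).flatten ++ C := by
  rw [List.replicate_succ', List.flatten_append]
  simp

lemma pow_reduced (V C : List (α × Bool)) (hC : C ≠ []) (m : ℕ) (hm : 1 ≤ m)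
    (hL : Red' (V ++ C ++ invRev V))
    (hj : ∀ a ∈ C.getLast?, ∀ b ∈ C.head?, R' a b) :
    Red' (V ++ (List.replicate m C).flatten ++ invRev V) := by
  obtain ⟨m, rfl⟩ : ∃ m', m = m' + 1 := ⟨m - 1, by omega⟩
  have hL' : List.Chain' R' (V ++ (C ++ invRev V)) := by
    rwa [← List.append_assoc]
  obtain ⟨hV, hCV, hjV⟩ := List.isChain_append.1 hL'
  obtain ⟨hCr, hVi, hjCV⟩ := List.isChain_append.1 hCV
  set J := (List.replicate (m + 1) C).flatten with hJdef
  have hJne : J ≠ [] := by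
    rw [hJdef, flatten_replicate_succ]
    simp [hC]
  have hJhead : J.head? = C.head? := by
    rw [hJdef, flatten_replicate_succ, List.head?_append_of_ne_nil _ hC]
  have hJlast : J.getLast? = C.getLast? := by
    rw [hJdef, flatten_replicate_succ', List.getLast?_append_of_ne_nil _ hC]
  have hJ : List.Chain' R' J := by
    rw [hJdef]
    have hnotmem : [] ∉ List.replicate (m + 1) C := by
      intro hmem
      exact hC (List.eq_of_mem_replicate hmem).symm
    show List.IsChain _ _
    rw [List.isChain_flatten hnotmem]
    constructor
    · intro l hl
      rw [List.eq_of_mem_replicate hl]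
      exact hCr
    · exact chain'_replicate_of_rel hj _
  rw [List.append_assoc]
  refine List.IsChain.append hV (List.IsChain.append hJ hVi ?_) ?_
  · rw [hJlast]
    exact hjCV
  · intro x hx y hy
    rw [List.head?_append_of_ne_nil _ hJne, hJhead] at hy
    apply hjV x hx y
    rwa [List.head?_append_of_ne_nil _ hC]

set_option synthInstance.maxHeartbeats 1000000 in
lemma card_bound (k n : ℕ) (hk : 2 ≤ k) :
    Nat.card {w : FreeGroup (Fin k) // w ≠ 1 ∧
        (∃ (u : FreeGroup (Fin k)) (m : ℕ), 2 ≤ m ∧ w = u ^ m) ∧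
        (FreeGroup.toWord w).length = n}
      ≤ (n + 1) * ((n + 1) * (k * 2) ^ (n / 2)) := by
  classical
  have hk0 : 0 < k := by omega
  set T := {w : FreeGroup (Fin k) // w ≠ 1 ∧
      (∃ (u : FreeGroup (Fin k)) (m : ℕ), 2 ≤ m ∧ w = u ^ m) ∧
      (FreeGroup.toWord w).length = n} with hT
  have hex : ∀ w : T, ∃ VC : List (Fin k × Bool) × List (Fin k × Bool), ∃ m : ℕ,
      2 ≤ m ∧ VC.2 ≠ [] ∧
      (w : FreeGroup (Fin k)).toWord
        = VC.1 ++ (List.replicate m VC.2).flatten ++ invRev VC.1 := by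
    intro w
    obtain ⟨hw1, hpow, hlen⟩ := w.2
    obtain ⟨u, m, hm, hwum⟩ := hpow
    have hu : u ≠ 1 := by rintro rfl; rw [one_pow] at hwum; exact hw1 hwum
    have hne : u.toWord ≠ [] := fun h => hu (FreeGroup.toWord_eq_nil_iff.1 h)
    obtain ⟨V, C, hC, hdec, hj⟩ :=
      cyclic_decomp u.toWord.length u.toWord le_rfl (red'_toWord u) hne
    refine ⟨(V, C), m, hm, hC, ?_⟩
    have hred : Red' (V ++ (List.replicate m C).flatten ++ invRev V) :=
      pow_reduced V C hC m (by omega) (hdec ▸ red'_toWord u) hj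
    have hu' : u = FreeGroup.mk V * FreeGroup.mk C * (FreeGroup.mk V)⁻¹ := by
      rw [inv_mk, mul_mk, mul_mk, ← hdec, mk_toWord]
    have hpm : u ^ m = FreeGroup.mk (V ++ (List.replicate m C).flatten ++ invRev V) := by
      rw [hu', conj_pow, pow_mk, inv_mk, mul_mk, mul_mk]
    rw [hwum, hpm, toWord_mk_eq hred]
  choose p m hm hpne hw using hex
  have hkey : ∀ w : T, 2 * (p w).1.length + m w * (p w).2.length = n := by
    intro w
    have h1 := congrArg List.length (hw w)
    have h2 : ((w : FreeGroup (Fin k)).toWord).length = n := w.2.2.2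
    rw [h2] at h1
    simp [List.length_flatten, List.map_replicate, List.sum_replicate, smul_eq_mul] at h1
    omega
  have hCpos : ∀ w : T, 1 ≤ (p w).2.length := fun w => List.length_pos_iff.2 (hpne w)
  have hmd : ∀ w : T, 2 * (p w).2.length ≤ m w * (p w).2.length :=
    fun w => Nat.mul_le_mul_right _ (hm w)
  have hVC : ∀ w : T, (p w).1.length + (p w).2.length ≤ n / 2 := by
    intro w
    have h1 := hkey w
    have h2 := hmd w
    omega
  let d0 : Fin k × Bool := (⟨0, hk0⟩, true)
  let f : T → Fin (n + 1) × Fin (n + 1) × (Fin (n / 2) → Fin k × Bool) := fun w =>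
    (⟨(p w).1.length, by
        have h1 := hkey w; have h2 := hmd w; have h3 := hCpos w; omega⟩,
     ⟨(p w).2.length, by
        have h1 := hkey w; have h2 := hmd w; have h3 := hCpos w; omega⟩,
     fun i => ((p w).1 ++ (p w).2).getD i d0)
  have hinj : Function.Injective f := by
    intro w₁ w₂ hff
    have h1 : (p w₁).1.length = (p w₂).1.length := by
      have := congrArg (fun x => (x.1 : ℕ)) hff
      simpa [f] using this
    have h2 : (p w₁).2.length = (p w₂).2.length := by
      have := congrArg (fun x => (x.2.1 : ℕ)) hff
      simpa [f] using this
    have h3 : ∀ i : Fin (n / 2),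
        ((p w₁).1 ++ (p w₁).2).getD i d0 = ((p w₂).1 ++ (p w₂).2).getD i d0 := by
      intro i
      have := congrArg (fun x => x.2.2 i) hff
      simpa [f] using this
    have hlist : (p w₁).1 ++ (p w₁).2 = (p w₂).1 ++ (p w₂).2 := by
      apply List.ext_getElem (by simp [h1, h2])
      intro i hi1 hi2
      have hi : i < n / 2 := by
        have hv := hVC w₁
        simp [List.length_append] at hi1
        omega
      have h4 := h3 ⟨i, hi⟩
      rwa [List.getD_eq_getElem?_getD, List.getD_eq_getElem?_getD,
        List.getElem?_eq_getElem hi1, List.getElem?_eq_getElem hi2,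
        Option.getD_some, Option.getD_some] at h4
    obtain ⟨hV, hC⟩ := List.append_inj hlist h1
    have hmw : m w₁ = m w₂ := by
      have k1 := hkey w₁
      have k2 := hkey w₂
      rw [h1, h2] at k1
      have e1 : 2 * (p w₂).1.length + m w₁ * (p w₂).2.length
          = 2 * (p w₂).1.length + m w₂ * (p w₂).2.length := k1.trans k2.symm
      exact Nat.eq_of_mul_eq_mul_right (hCpos w₂) (Nat.add_left_cancel e1)
    have htw : (w₁ : FreeGroup (Fin k)).toWord = (w₂ : FreeGroup (Fin k)).toWord := by
      rw [hw w₁, hw w₂, hV, hC, hmw]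
    exact Subtype.ext (FreeGroup.toWord_injective htw)
  calc Nat.card T ≤ Nat.card (Fin (n + 1) × Fin (n + 1) × (Fin (n / 2) → Fin k × Bool)) :=
        Nat.card_le_card_of_injective f hinj
    _ = (n + 1) * ((n + 1) * (k * 2) ^ (n / 2)) := by
        simp [Nat.card_eq_fintype_card, Fintype.card_fun]

end PPNeg

theorem proper_powers_exponentially_negligible (k : ℕ) (hk : 2 ≤ k) :
    ∃ C : ℝ, ∃ q : ℝ, 0 ≤ q ∧ q < 1 ∧ ∀ n : ℕ, 1 ≤ n →
      (Nat.card {w : FreeGroup (Fin k) // w ≠ 1 ∧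
          (∃ (u : FreeGroup (Fin k)) (m : ℕ), 2 ≤ m ∧ w = u ^ m) ∧
          (FreeGroup.toWord w).length = n} : ℝ) /
        (2 * k * (2 * k - 1 : ℝ) ^ (n - 1)) ≤ C * q ^ n := by
  have hk4 : (4 : ℝ) ≤ 2 * k := by
    have : (2 : ℝ) ≤ k := by exact_mod_cast hk
    linarith
  have h2k0 : (0 : ℝ) < 2 * k := by linarith
  set s : ℝ := Real.sqrt (2 * k) with hs
  have hs0 : 0 ≤ s := Real.sqrt_nonneg _
  have hs2 : s ^ 2 = 2 * k := Real.sq_sqrt (le_of_lt h2k0)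
  have hs1 : 1 ≤ s := by nlinarith
  have hsle : s ≤ 2 * k - 2 := by nlinarith
  have hden : (0 : ℝ) < 2 * k - 1 := by linarith
  set r : ℝ := s / (2 * k - 1) with hr
  have hr0 : 0 ≤ r := div_nonneg hs0 (le_of_lt hden)
  have hr1 : r < 1 := by
    rw [hr, div_lt_one hden]; linarith
  set q : ℝ := (r + 1) / 2 with hq
  have hq0 : 0 < q := by rw [hq]; linarith
  have hq1 : q < 1 := by rw [hq]; linarith
  have hrq : r < q := by rw [hq]; linarith
  set t : ℝ := r / q with ht
  have ht0 : 0 ≤ t := div_nonneg hr0 hq0.le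
  have ht1 : t < 1 := by rw [ht, div_lt_one hq0]; exact hrq
  have htabs : |t| < 1 := abs_lt.2 ⟨by linarith, ht1⟩
  have htend : Filter.Tendsto (fun n : ℕ => ((n : ℝ) + 1) ^ 2 * t ^ n)
      Filter.atTop (nhds 0) := by
    have h2 := tendsto_pow_const_mul_const_pow_of_abs_lt_one 2 htabs
    have h1 := tendsto_pow_const_mul_const_pow_of_abs_lt_one 1 htabs
    have h0 := tendsto_pow_const_mul_const_pow_of_abs_lt_one 0 htabs
    have heq : (fun n : ℕ => ((n : ℝ) + 1) ^ 2 * t ^ n)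
        = fun n : ℕ => (n : ℝ) ^ 2 * t ^ n + (2 * ((n : ℝ) ^ 1 * t ^ n) + (n : ℝ) ^ 0 * t ^ n) := by
      funext n; ring
    rw [heq]
    have := h2.add ((h1.const_mul (2 : ℝ)).add h0)
    simpa using this
  obtain ⟨Cb, hCb⟩ := htend.bddAbove_range
  have hCbn : ∀ nn : ℕ, ((nn : ℝ) + 1) ^ 2 * t ^ nn ≤ Cb := fun nn => hCb (Set.mem_range_self nn)
  have hCb1 : (1 : ℝ) ≤ Cb := by simpa using hCbn 0
  refine ⟨Cb, q, hq0.le, hq1, ?_⟩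
  intro n hn
  have hD : (0 : ℝ) < 2 * k * (2 * k - 1 : ℝ) ^ (n - 1) := by positivity
  rw [div_le_iff₀ hD]
  have hcard := PPNeg.card_bound k n hk
  calc (Nat.card {w : FreeGroup (Fin k) // w ≠ 1 ∧
          (∃ (u : FreeGroup (Fin k)) (m : ℕ), 2 ≤ m ∧ w = u ^ m) ∧
          (FreeGroup.toWord w).length = n} : ℝ)
      ≤ (((n + 1) * ((n + 1) * (k * 2) ^ (n / 2)) : ℕ) : ℝ) := Nat.cast_le.2 hcard
    _ = ((n : ℝ) + 1) ^ 2 * ((2 * (k : ℝ)) ^ (n / 2)) := by push_cast; ring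
    _ ≤ ((n : ℝ) + 1) ^ 2 * s ^ n := by
        apply mul_le_mul_of_nonneg_left ?_ (by positivity)
        have he : (2 * (k : ℝ)) ^ (n / 2) = s ^ (2 * (n / 2)) := by
          rw [pow_mul, hs2]
        rw [he]
        exact pow_le_pow_right₀ hs1 (by omega)
    _ = (((n : ℝ) + 1) ^ 2 * t ^ n) * (q ^ n * (2 * (k : ℝ) - 1) ^ n) := by
        have hseq : s = t * q * (2 * (k : ℝ) - 1) := by
          rw [ht, hr]
          field_simp
        rw [hseq, mul_pow, mul_pow]; ring
    _ ≤ Cb * (q ^ n * (2 * (k : ℝ) - 1) ^ n) :=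
        mul_le_mul_of_nonneg_right (hCbn n) (by positivity)
    _ ≤ Cb * q ^ n * (2 * k * (2 * k - 1 : ℝ) ^ (n - 1)) := by
        obtain ⟨j, rfl⟩ : ∃ j, n = j + 1 := ⟨n - 1, by omega⟩
        simp only [Nat.add_sub_cancel]
        have hstep : q ^ (j + 1) * ((2 * (k : ℝ) - 1) ^ (j + 1))
            ≤ q ^ (j + 1) * ((2 * (k : ℝ) - 1) ^ j * (2 * k)) := by
          rw [pow_succ (2 * (k : ℝ) - 1) j]
          have h1 : (2 * (k : ℝ) - 1) ≤ 2 * k := by linarith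
          have h2 : (0 : ℝ) ≤ (2 * (k : ℝ) - 1) ^ j := by positivity
          have h3 : (0 : ℝ) ≤ q ^ (j + 1) := by positivity
          exact mul_le_mul_of_nonneg_left (mul_le_mul_of_nonneg_left h1 h2) h3
        calc Cb * (q ^ (j + 1) * (2 * (k : ℝ) - 1) ^ (j + 1))
            ≤ Cb * (q ^ (j + 1) * ((2 * (k : ℝ) - 1) ^ j * (2 * k))) := by
              apply mul_le_mul_of_nonneg_left hstep (by linarith)
          _ = Cb * q ^ (j + 1) * (2 * k * (2 * k - 1 : ℝ) ^ j) := by ring
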